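/- Let s, n be positive integers with s ≤ n. Then for every real number ξ, ∑_{p=1}^{s} (−1)^{s−p} · C(n−p, s−p) · C(n+s−1, n+s−p) · (1+ξ)^{n+s−p} = ∑_{k=0}^{s−1} C(n+s−1, k) · C(2(s−1)−k, s−1) · ξ^{k} + (−1)^{s−1} · ∑_{k=2s−1}^{n+s−1} C(n+s−1, k) · C(k−s, s−1) · ξ^{k}. -/

import Mathlib

open Finset

/-- Generalized binomial coefficient with integer upper argument, as a real number. -/
noncomputable def gbc (a : ℤ) (r : ℕ) : ℝ :=
  if 0 ≤ a then (a.toNat.choose r : ℝ)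
  else (-1) ^ r * ((((r : ℤ) - 1 - a).toNat.choose r : ℝ))

lemma gbc_zero (a : ℤ) : gbc a 0 = 1 := by
  unfold gbc; split <;> simp

lemma gbc_pascal (a : ℤ) (r : ℕ) : gbc a (r + 1) = gbc (a - 1) (r + 1) + gbc (a - 1) r := by
  rcases lt_trichotomy a 0 with h | h | h
  · have h0 : ¬ (0:ℤ) ≤ a := by omega
    have h1 : ¬ (0:ℤ) ≤ a - 1 := by omega
    simp only [gbc, if_neg h0, if_neg h1]
    have e1 : (((r + 1 : ℕ) : ℤ) - 1 - a).toNat = ((r : ℤ) - 1 - (a - 1)).toNat := by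
      push_cast; omega
    have e2 : (((r + 1 : ℕ) : ℤ) - 1 - (a - 1)).toNat = ((r : ℤ) - 1 - (a - 1)).toNat + 1 := by
      push_cast; omega
    set t := ((r : ℤ) - 1 - (a - 1)).toNat with ht
    rw [e1, e2, Nat.choose_succ_succ]
    push_cast; ring
  · subst h
    have h1 : ¬ (0:ℤ) ≤ (0:ℤ) - 1 := by omega
    simp only [gbc, if_pos le_rfl, if_neg h1]
    have e1 : (((r + 1 : ℕ) : ℤ) - 1 - ((0:ℤ) - 1)).toNat = r + 1 := by push_cast; omega
    have e2 : ((r : ℤ) - 1 - ((0:ℤ) - 1)).toNat = r := by push_cast; omega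
    rw [e1, e2]
    simp [Nat.choose_zero_succ, pow_succ]
  · have h0 : (0:ℤ) ≤ a := by omega
    have h1 : (0:ℤ) ≤ a - 1 := by omega
    simp only [gbc, if_pos h0, if_pos h1]
    have e1 : a.toNat = (a - 1).toNat + 1 := by omega
    rw [e1, Nat.choose_succ_succ]
    push_cast; ring

/-- Vandermonde-type identity with one negative upper argument. -/
lemma gbc_vandermonde (M : ℕ) : ∀ (N r : ℕ),
    ∑ j ∈ Finset.range (r + 1),
      (-1 : ℝ) ^ j * ((M + j).choose j : ℝ) * (N.choose (r - j) : ℝ)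
      = gbc ((N : ℤ) - M - 1) r := by
  intro N
  induction N with
  | zero =>
    intro r
    have hz : ∀ j ∈ Finset.range r,
        (-1 : ℝ) ^ j * ((M + j).choose j : ℝ) * ((0:ℕ).choose (r - j) : ℝ) = 0 := by
      intro j hj
      rw [Finset.mem_range] at hj
      have : (0:ℕ).choose (r - j) = 0 := Nat.choose_eq_zero_of_lt (by omega)
      rw [this]; push_cast; ring
    rw [Finset.sum_range_succ, Finset.sum_eq_zero hz]
    have h1 : ¬ (0:ℤ) ≤ ((0:ℕ) : ℤ) - M - 1 := by push_cast; omega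
    simp only [gbc, if_neg h1]
    have e1 : ((r : ℤ) - 1 - (((0:ℕ) : ℤ) - M - 1)).toNat = M + r := by push_cast; omega
    rw [e1]
    simp
  | succ N ih =>
    intro r
    cases r with
    | zero =>
      have e1 : ((N + 1 : ℕ) : ℤ) - M - 1 = (N : ℤ) - M := by push_cast; ring
      rw [e1]
      have : gbc ((N : ℤ) - M) 0 = 1 := gbc_zero _
      simp [this]
    | succ r =>
      have split : ∀ j ∈ Finset.range (r + 1),
          (-1 : ℝ) ^ j * ((M + j).choose j : ℝ) * ((N+1).choose (r + 1 - j) : ℝ)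
          = (-1 : ℝ) ^ j * ((M + j).choose j : ℝ) * (N.choose (r - j) : ℝ)
            + (-1 : ℝ) ^ j * ((M + j).choose j : ℝ) * (N.choose (r + 1 - j) : ℝ) := by
        intro j hj
        rw [Finset.mem_range] at hj
        have e : r + 1 - j = (r - j) + 1 := by omega
        rw [e, Nat.choose_succ_succ]
        push_cast; ring
      have A : ∑ j ∈ Finset.range (r + 2),
            (-1 : ℝ) ^ j * ((M + j).choose j : ℝ) * ((N+1).choose (r + 1 - j) : ℝ)
          = (∑ j ∈ Finset.range (r + 1),
              (-1 : ℝ) ^ j * ((M + j).choose j : ℝ) * ((N+1).choose (r + 1 - j) : ℝ))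
            + (-1 : ℝ) ^ (r+1) * ((M + (r+1)).choose (r+1) : ℝ) := by
        rw [Finset.sum_range_succ]; simp
      have B : ∑ j ∈ Finset.range (r + 2),
            (-1 : ℝ) ^ j * ((M + j).choose j : ℝ) * (N.choose (r + 1 - j) : ℝ)
          = (∑ j ∈ Finset.range (r + 1),
              (-1 : ℝ) ^ j * ((M + j).choose j : ℝ) * (N.choose (r + 1 - j) : ℝ))
            + (-1 : ℝ) ^ (r+1) * ((M + (r+1)).choose (r+1) : ℝ) := by
        rw [Finset.sum_range_succ]; simp
      have C : ∑ j ∈ Finset.range (r + 1),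
            (-1 : ℝ) ^ j * ((M + j).choose j : ℝ) * ((N+1).choose (r + 1 - j) : ℝ)
          = (∑ j ∈ Finset.range (r + 1),
              (-1 : ℝ) ^ j * ((M + j).choose j : ℝ) * (N.choose (r - j) : ℝ))
            + ∑ j ∈ Finset.range (r + 1),
              (-1 : ℝ) ^ j * ((M + j).choose j : ℝ) * (N.choose (r + 1 - j) : ℝ) := by
        rw [Finset.sum_congr rfl split, Finset.sum_add_distrib]
      have hsplit : ∑ j ∈ Finset.range (r + 2),
            (-1 : ℝ) ^ j * ((M + j).choose j : ℝ) * ((N+1).choose (r + 1 - j) : ℝ)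
          = (∑ j ∈ Finset.range (r + 1),
              (-1 : ℝ) ^ j * ((M + j).choose j : ℝ) * (N.choose (r - j) : ℝ))
            + ∑ j ∈ Finset.range (r + 2),
              (-1 : ℝ) ^ j * ((M + j).choose j : ℝ) * (N.choose (r + 1 - j) : ℝ) := by
        linear_combination A + C - B
      have e4 : ((N + 1 : ℕ) : ℤ) - M - 1 = ((N : ℤ) - M - 1) + 1 := by push_cast; ring
      have hp := gbc_pascal (((N : ℤ) - M - 1) + 1) r
      rw [add_sub_cancel_right] at hp
      rw [hsplit, ih r, ih (r+1), e4, hp]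
      ring

lemma tri (m a b : ℕ) (ha : a ≤ m) :
    m.choose a * (m - a).choose b = m.choose b * (m - b).choose a := by
  rcases le_or_gt (a + b) m with h | h
  · have h1 := Nat.choose_mul (n := m) (k := a + b) (s := a) (by omega)
    have h2 := Nat.choose_mul (n := m) (k := a + b) (s := b) (by omega)
    have e1 : a + b - a = b := by omega
    have e2 : a + b - b = a := by omega
    rw [e1] at h1; rw [e2] at h2
    rw [← h1, ← h2, Nat.choose_symm_add]
  · have hz : (m - a).choose b = 0 := Nat.choose_eq_zero_of_lt (by omega)
    rw [hz, Nat.mul_zero]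
    rcases le_or_gt b m with hb | hb
    · have : (m - b).choose a = 0 := Nat.choose_eq_zero_of_lt (by omega)
      rw [this, Nat.mul_zero]
    · have : m.choose b = 0 := Nat.choose_eq_zero_of_lt hb
      rw [this, Nat.zero_mul]

lemma coeff (s n k : ℕ) (hs : 0 < s) (hsn : s ≤ n) (hk : k ≤ n + s - 1) :
    ∑ p ∈ Finset.Icc 1 s,
      (-1:ℝ)^(s-p) * ((n-p).choose (s-p) : ℝ) * ((n+s-1).choose (n+s-p) : ℝ) *
        ((n+s-p).choose k : ℝ)
    = ((n+s-1).choose k : ℝ) * gbc (2*(s:ℤ) - 2 - k) (s-1) := by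
  have key : ∀ p ∈ Finset.Icc 1 s,
      (-1:ℝ)^(s-p) * ((n-p).choose (s-p) : ℝ) * ((n+s-1).choose (n+s-p) : ℝ) *
        ((n+s-p).choose k : ℝ)
      = ((n+s-1).choose k : ℝ) *
          ((-1:ℝ)^(s-p) * ((n-p).choose (s-p) : ℝ) * ((n+s-1-k).choose (p-1) : ℝ)) := by
    intro p hp
    rw [Finset.mem_Icc] at hp
    have h1 : (n+s-1).choose (n+s-p) = (n+s-1).choose (p-1) := by
      have e : n+s-p = (n+s-1) - (p-1) := by omega
      rw [e, Nat.choose_symm (by omega)]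
    have h2 : (n+s-1).choose (p-1) * (n+s-p).choose k
        = (n+s-1).choose k * (n+s-1-k).choose (p-1) := by
      have e : n+s-p = (n+s-1) - (p-1) := by omega
      rw [e]
      exact tri (n+s-1) (p-1) k (by omega)
    rw [h1]
    have h2' : ((n+s-1).choose (p-1) : ℝ) * ((n+s-p).choose k : ℝ)
        = ((n+s-1).choose k : ℝ) * ((n+s-1-k).choose (p-1) : ℝ) := by
      exact_mod_cast congrArg (fun x : ℕ => (x : ℝ)) h2
    linear_combination ((-1:ℝ)^(s-p) * ((n-p).choose (s-p) : ℝ)) * h2'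
  rw [Finset.sum_congr rfl key, ← Finset.mul_sum]
  congr 1
  have reind : ∑ p ∈ Finset.Icc 1 s,
      (-1:ℝ)^(s-p) * ((n-p).choose (s-p) : ℝ) * ((n+s-1-k).choose (p-1) : ℝ)
      = ∑ j ∈ Finset.range s,
        (-1:ℝ)^j * ((n-s+j).choose j : ℝ) * ((n+s-1-k).choose (s-1-j) : ℝ) := by
    apply Finset.sum_nbij' (i := fun p => s - p) (j := fun j => s - j)
    · intro p hp
      rw [Finset.mem_Icc] at hp
      rw [Finset.mem_range]; omega
    · intro j hj
      rw [Finset.mem_range] at hj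
      rw [Finset.mem_Icc]; omega
    · intro p hp
      rw [Finset.mem_Icc] at hp
      omega
    · intro j hj
      rw [Finset.mem_range] at hj
      omega
    · intro p hp
      rw [Finset.mem_Icc] at hp
      have e1 : n - s + (s - p) = n - p := by omega
      have e2 : s - 1 - (s - p) = p - 1 := by omega
      rw [e1, e2]
  rw [reind]
  have hv := gbc_vandermonde (n - s) (n + s - 1 - k) (s - 1)
  rw [show s - 1 + 1 = s from by omega] at hv
  have harg : ((n + s - 1 - k : ℕ) : ℤ) - (n - s : ℕ) - 1 = 2*(s:ℤ) - 2 - k := by omega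
  rw [harg] at hv
  have hterm : ∀ j ∈ Finset.range s,
      (-1:ℝ)^j * ((n-s+j).choose j : ℝ) * ((n+s-1-k).choose (s-1-j) : ℝ)
      = (-1:ℝ)^j * (((n-s)+j).choose j : ℝ) * ((n+s-1-k).choose (s-1-j) : ℝ) := by
    intro j hj; rfl
  rw [Finset.sum_congr rfl hterm, hv]

/-- Non-alternating closed form of the quantity `U₂`:
`∑_{p=1}^{s} (−1)^{s−p} C(n−p,s−p) C(n+s−1,n+s−p) (1+ξ)^{n+s−p}
  = ∑_{k=0}^{s−1} C(n+s−1,k) C(2(s−1)−k,s−1) ξ^k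
    + (−1)^{s−1} ∑_{k=2s−1}^{n+s−1} C(n+s−1,k) C(k−s,s−1) ξ^k`. -/
theorem U2_nonalternating (s n : ℕ) (hs : 0 < s) (hsn : s ≤ n) (ξ : ℝ) :
    ∑ p ∈ Finset.Icc 1 s,
      (-1 : ℝ) ^ (s - p) * (Nat.choose (n - p) (s - p) : ℝ) *
        (Nat.choose (n + s - 1) (n + s - p) : ℝ) * (1 + ξ) ^ (n + s - p)
      = ∑ k ∈ Finset.range s,
          (Nat.choose (n + s - 1) k : ℝ) *
            (Nat.choose (2 * (s - 1) - k) (s - 1) : ℝ) * ξ ^ k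
        + (-1 : ℝ) ^ (s - 1) *
            ∑ k ∈ Finset.Icc (2 * s - 1) (n + s - 1),
              (Nat.choose (n + s - 1) k : ℝ) * (Nat.choose (k - s) (s - 1) : ℝ) * ξ ^ k := by
  have expand : ∀ p ∈ Finset.Icc 1 s, (1 + ξ) ^ (n + s - p)
      = ∑ k ∈ Finset.range (n + s), ((n + s - p).choose k : ℝ) * ξ ^ k := by
    intro p hp
    rw [Finset.mem_Icc] at hp
    rw [add_comm (1:ℝ) ξ, add_pow]
    simp only [one_pow, mul_one]
    rw [Finset.sum_subset (Finset.range_subset_range.mpr (show n + s - p + 1 ≤ n + s by omega))]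
    · exact Finset.sum_congr rfl (fun k _ => by ring)
    · intro k hk1 hk2
      rw [Finset.mem_range] at hk1
      rw [Finset.mem_range, not_lt] at hk2
      have : (n + s - p).choose k = 0 := Nat.choose_eq_zero_of_lt (by omega)
      rw [this]
      push_cast
      ring
  have hmain : ∑ p ∈ Finset.Icc 1 s,
      (-1 : ℝ) ^ (s - p) * ((n - p).choose (s - p) : ℝ) *
        ((n + s - 1).choose (n + s - p) : ℝ) * (1 + ξ) ^ (n + s - p)
      = ∑ k ∈ Finset.range (n + s),
          ((n + s - 1).choose k : ℝ) * gbc (2*(s:ℤ) - 2 - k) (s - 1) * ξ ^ k := by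
    calc ∑ p ∈ Finset.Icc 1 s,
        (-1 : ℝ) ^ (s - p) * ((n - p).choose (s - p) : ℝ) *
          ((n + s - 1).choose (n + s - p) : ℝ) * (1 + ξ) ^ (n + s - p)
        = ∑ p ∈ Finset.Icc 1 s, ∑ k ∈ Finset.range (n + s),
            (-1 : ℝ) ^ (s - p) * ((n - p).choose (s - p) : ℝ) *
              ((n + s - 1).choose (n + s - p) : ℝ) * ((n + s - p).choose k : ℝ) * ξ ^ k := by
          apply Finset.sum_congr rfl
          intro p hp
          rw [expand p hp, Finset.mul_sum]
          exact Finset.sum_congr rfl (fun k _ => by ring)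
      _ = ∑ k ∈ Finset.range (n + s), ∑ p ∈ Finset.Icc 1 s,
            (-1 : ℝ) ^ (s - p) * ((n - p).choose (s - p) : ℝ) *
              ((n + s - 1).choose (n + s - p) : ℝ) * ((n + s - p).choose k : ℝ) * ξ ^ k :=
          Finset.sum_comm
      _ = ∑ k ∈ Finset.range (n + s),
            ((n + s - 1).choose k : ℝ) * gbc (2*(s:ℤ) - 2 - k) (s - 1) * ξ ^ k := by
          apply Finset.sum_congr rfl
          intro k hk
          rw [Finset.mem_range] at hk
          rw [← Finset.sum_mul, coeff s n k hs hsn (by omega)]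
  rw [hmain]
  rw [Finset.range_eq_Ico,
    ← Finset.sum_Ico_consecutive _ (show 0 ≤ s by omega) (show s ≤ n + s by omega)]
  have part1 : ∑ k ∈ Finset.Ico 0 s,
      ((n + s - 1).choose k : ℝ) * gbc (2*(s:ℤ) - 2 - k) (s - 1) * ξ ^ k
      = ∑ k ∈ Finset.range s,
          ((n + s - 1).choose k : ℝ) * ((2 * (s - 1) - k).choose (s - 1) : ℝ) * ξ ^ k := by
    rw [← Finset.range_eq_Ico]
    apply Finset.sum_congr rfl
    intro k hk
    rw [Finset.mem_range] at hk
    have h0 : (0:ℤ) ≤ 2*(s:ℤ) - 2 - k := by omega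
    simp only [gbc, if_pos h0]
    rw [show (2*(s:ℤ) - 2 - k).toNat = 2 * (s - 1) - k from by omega]
  have eqI : Finset.Icc (2 * s - 1) (n + s - 1) = Finset.Ico (2 * s - 1) (n + s) := by
    rw [← Finset.Ico_add_one_right_eq_Icc]
    congr 1
    omega
  have part2 : ∑ k ∈ Finset.Ico s (n + s),
      ((n + s - 1).choose k : ℝ) * gbc (2*(s:ℤ) - 2 - k) (s - 1) * ξ ^ k
      = (-1 : ℝ) ^ (s - 1) *
          ∑ k ∈ Finset.Icc (2 * s - 1) (n + s - 1),
            ((n + s - 1).choose k : ℝ) * ((k - s).choose (s - 1) : ℝ) * ξ ^ k := by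
    rw [eqI, Finset.mul_sum,
      ← Finset.sum_subset (Finset.Ico_subset_Ico (by omega : s ≤ 2 * s - 1) le_rfl)]
    · apply Finset.sum_congr rfl
      intro k hk
      rw [Finset.mem_Ico] at hk
      have h0 : ¬ (0:ℤ) ≤ 2*(s:ℤ) - 2 - k := by omega
      simp only [gbc, if_neg h0]
      rw [show (((s - 1 : ℕ) : ℤ) - 1 - (2*(s:ℤ) - 2 - k)).toNat = k - s from by omega]
      ring
    · intro k hk1 hk2
      rw [Finset.mem_Ico] at hk1
      rw [Finset.mem_Ico, not_and_or, not_le, not_lt] at hk2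
      have hk3 : s ≤ k ∧ k < 2 * s - 1 := by omega
      have h0 : (0:ℤ) ≤ 2*(s:ℤ) - 2 - k := by omega
      simp only [gbc, if_pos h0]
      have : (2*(s:ℤ) - 2 - k).toNat.choose (s - 1) = 0 :=
        Nat.choose_eq_zero_of_lt (by omega)
      rw [this]
      push_cast
      ring
  rw [part1, part2]
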